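/- arXiv:2409.00276 — 2 statements merged into one kernel-verified Lean document; each statement's English description precedes it below -/
import Mathlib

section
/- Let d̂ ∈ ℝⁿ be a unit vector (‖d̂‖₂ = 1), let Ā ∈ ℝ^{n×n}, d̄ ∈ ℝⁿ, and let Δ ≥ 2 be an integer. Then the following are equivalent: (i) for every matrix Z ∈ ℝ^{n×n}, d̂ᵀ Z Ā^{Δ−1} d̄ ≤ Σ_{t=0}^{Δ−2} ‖Z Ā^{t} d̄‖₂; (ii) for every vector z ∈ ℝⁿ, zᵀ Ā^{Δ−1} d̄ ≤ Σ_{t=0}^{Δ−2} |zᵀ Ā^{t} d̄|. -/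
open Matrix
open scoped BigOperators

/-- Euclidean norm of a vector in `ℝ^k`. -/
noncomputable def e2norm {k : ℕ} (v : Fin k → ℝ) : ℝ := Real.sqrt (∑ i, (v i) ^ 2)

lemma e2norm_smul {k : ℕ} (c : ℝ) (v : Fin k → ℝ) :
    e2norm (c • v) = |c| * e2norm v := by
  have h : ∑ i, ((c • v) i) ^ 2 = c ^ 2 * ∑ i, (v i) ^ 2 := by
    simp [mul_pow, Finset.mul_sum]
  rw [e2norm, h, Real.sqrt_mul (sq_nonneg c), Real.sqrt_sq_eq_abs, e2norm]

lemma e2norm_cauchy {k : ℕ} (v w : Fin k → ℝ) :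
    v ⬝ᵥ w ≤ e2norm v * e2norm w := by
  have h := Finset.sum_mul_sq_le_sq_mul_sq Finset.univ v w
  have h2 : |v ⬝ᵥ w| ≤ e2norm v * e2norm w := by
    rw [← Real.sqrt_sq_eq_abs, e2norm, e2norm,
      ← Real.sqrt_mul (Finset.sum_nonneg fun i _ => sq_nonneg (v i))]
    exact Real.sqrt_le_sqrt (by simpa [dotProduct] using h)
  exact (le_abs_self _).trans h2

/-- rank-one reduction for Δ-spaced attacks on linear systems.
For a unit vector `d̂ ∈ ℝⁿ`, `Ā ∈ ℝ^{n×n}`, `d̄ ∈ ℝⁿ` and an integer `Δ ≥ 2`: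
`∀ Z, d̂ᵀ Z Ā^{Δ−1} d̄ ≤ Σ_{t=0}^{Δ−2} ‖Z Ā^t d̄‖₂` holds iff
`∀ z, zᵀ Ā^{Δ−1} d̄ ≤ Σ_{t=0}^{Δ−2} |zᵀ Ā^t d̄|`. -/
theorem rank_one_reduction
    (n : ℕ) (dh : Fin n → ℝ) (hdh : e2norm dh = 1)
    (Abar : Matrix (Fin n) (Fin n) ℝ) (db : Fin n → ℝ)
    (Δ : ℕ) (hΔ : 2 ≤ Δ) :
    (∀ Z : Matrix (Fin n) (Fin n) ℝ,
        dh ⬝ᵥ Z.mulVec ((Abar ^ (Δ - 1)).mulVec db) ≤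
          ∑ t ∈ Finset.range (Δ - 1), e2norm (Z.mulVec ((Abar ^ t).mulVec db)))
      ↔
    (∀ z : Fin n → ℝ,
        z ⬝ᵥ (Abar ^ (Δ - 1)).mulVec db ≤
          ∑ t ∈ Finset.range (Δ - 1), |z ⬝ᵥ (Abar ^ t).mulVec db|) := by
  have hsum : ∑ i, dh i ^ 2 = 1 := Real.sqrt_eq_one.mp hdh
  have hdhdh : dh ⬝ᵥ dh = 1 := by
    rw [dotProduct]
    calc ∑ i, dh i * dh i = ∑ i, dh i ^ 2 := by
          apply Finset.sum_congr rfl; intro i _; ring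
      _ = 1 := hsum
  have hmv : ∀ z v : Fin n → ℝ, (vecMulVec dh z).mulVec v = (z ⬝ᵥ v) • dh := by
    intro z v
    funext i
    simp only [vecMulVec_apply, mulVec, dotProduct, Pi.smul_apply, smul_eq_mul]
    rw [Finset.sum_mul]
    apply Finset.sum_congr rfl
    intro j _
    ring
  constructor
  · intro h z
    have := h (vecMulVec dh z)
    rw [hmv, dotProduct_smul, smul_eq_mul, hdhdh, mul_one] at this
    refine this.trans (le_of_eq ?_)
    apply Finset.sum_congr rfl
    intro t _
    rw [hmv, e2norm_smul, hdh, mul_one]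
  · intro h Z
    have hdd : ∀ v : Fin n → ℝ, (Z.transpose.mulVec dh) ⬝ᵥ v = dh ⬝ᵥ Z.mulVec v := by
      intro v
      simp only [mulVec, dotProduct, transpose_apply, Finset.sum_mul, Finset.mul_sum]
      rw [Finset.sum_comm]
      apply Finset.sum_congr rfl
      intro i _
      apply Finset.sum_congr rfl
      intro j _
      ring
    have key := h (Z.transpose.mulVec dh)
    rw [hdd] at key
    refine key.trans ?_
    apply Finset.sum_le_sum
    intro t _
    rw [hdd]
    calc |dh ⬝ᵥ Z.mulVec ((Abar ^ t).mulVec db)|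
        ≤ e2norm dh * e2norm (Z.mulVec ((Abar ^ t).mulVec db)) := by
          rcases abs_cases (dh ⬝ᵥ Z.mulVec ((Abar ^ t).mulVec db)) with ⟨he, _⟩ | ⟨he, _⟩
          · rw [he]; exact e2norm_cauchy _ _
          · rw [he]
            have hcs := e2norm_cauchy (-dh) (Z.mulVec ((Abar ^ t).mulVec db))
            have hn : e2norm (-dh) = e2norm dh := by
              unfold e2norm; simp
            rw [hn, neg_dotProduct] at hcs
            exact hcs
      _ = e2norm (Z.mulVec ((Abar ^ t).mulVec db)) := by rw [hdh, one_mul]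
end

section
/- Let L, σ, λ > 0 with λ ≤ σL, let f : ℝⁿ → ℝᵐ be L-Lipschitz, let y ∈ ℝⁿ, and let Z ∈ ℝ^{m×n} with ‖Z‖_F = 1. Let D be a random vector in ℝⁿ satisfying the tail bound P(‖D‖₂ ≥ ε) ≤ 2 exp(−ε²/(2σ²)) for all ε ≥ 0, and suppose that for every v ∈ ℝᵐ, E[⟨v, f(y + D)⟩²] ≥ λ² ‖v‖₂² (i.e., E[f(y+D) f(y+D)ᵀ] ⪰ λ² I_m). Then P( ‖Zᵀ f(y + D)‖₂ ≥ λ/2 ) ≥ c λ⁴ / (σ⁴ L⁴), where c = 1/1058. -/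
open Matrix MeasureTheory
open scoped BigOperators

/-- Frobenius norm of a real matrix. -/
noncomputable def frob {a b : ℕ} (M : Matrix (Fin a) (Fin b) ℝ) : ℝ :=
  Real.sqrt (∑ i, ∑ j, (M i j) ^ 2)

lemma e2norm_nonneg {k : ℕ} (v : Fin k → ℝ) : 0 ≤ e2norm v := Real.sqrt_nonneg _

lemma e2norm_sq {k : ℕ} (v : Fin k → ℝ) : (e2norm v) ^ 2 = ∑ i, (v i) ^ 2 :=
  Real.sq_sqrt (Finset.sum_nonneg fun _ _ => sq_nonneg _)

lemma e2norm_eq_norm {k : ℕ} (v : Fin k → ℝ) :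
    e2norm v = ‖(WithLp.equiv 2 (Fin k → ℝ)).symm v‖ := by
  rw [EuclideanSpace.norm_eq]
  simp [e2norm, Real.norm_eq_abs, sq_abs]

lemma e2norm_add_le {k : ℕ} (u v : Fin k → ℝ) : e2norm (u + v) ≤ e2norm u + e2norm v := by
  simp only [e2norm_eq_norm]
  have h : (WithLp.equiv 2 (Fin k → ℝ)).symm (u + v)
      = (WithLp.equiv 2 (Fin k → ℝ)).symm u + (WithLp.equiv 2 (Fin k → ℝ)).symm v := rfl
  rw [h]; exact norm_add_le _ _

lemma e2norm_continuous {k : ℕ} : Continuous (fun v : Fin k → ℝ => e2norm v) := by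
  unfold e2norm
  exact Real.continuous_sqrt.comp (continuous_finset_sum _ fun i _ => (continuous_apply i).pow 2)

lemma abs_le_e2norm {k : ℕ} (v : Fin k → ℝ) (i : Fin k) : |v i| ≤ e2norm v := by
  rw [← Real.sqrt_sq_eq_abs]
  exact Real.sqrt_le_sqrt (Finset.single_le_sum (fun j _ => sq_nonneg (v j)) (Finset.mem_univ i))

lemma norm_le_e2norm {k : ℕ} (v : Fin k → ℝ) : ‖v‖ ≤ e2norm v := by
  rcases eq_or_ne k 0 with hk | hk
  · subst hk
    have h : ‖v‖ = 0 := by simp [Pi.norm_def]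
    rw [h]; exact e2norm_nonneg v
  · have : Nonempty (Fin k) := ⟨⟨0, Nat.pos_of_ne_zero hk⟩⟩
    rw [pi_norm_le_iff_of_nonneg (e2norm_nonneg v)]
    intro i; rw [Real.norm_eq_abs]; exact abs_le_e2norm v i

lemma e2norm_le_sqrt_mul_norm {k : ℕ} (v : Fin k → ℝ) :
    e2norm v ≤ Real.sqrt k * ‖v‖ := by
  have h1 : (e2norm v)^2 ≤ (k : ℝ) * ‖v‖^2 := by
    rw [e2norm_sq]
    calc ∑ i, (v i)^2 ≤ ∑ _i : Fin k, ‖v‖^2 := by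
          apply Finset.sum_le_sum
          intro i _
          have h := norm_le_pi_norm v i
          rw [Real.norm_eq_abs] at h
          nlinarith [abs_nonneg (v i), sq_abs (v i), norm_nonneg v]
      _ = (k : ℝ) * ‖v‖^2 := by simp [mul_comm]
  nlinarith [e2norm_nonneg v, Real.sq_sqrt (Nat.cast_nonneg k : (0:ℝ) ≤ k),
    Real.sqrt_nonneg (k:ℝ), norm_nonneg v,
    mul_nonneg (Real.sqrt_nonneg (k:ℝ)) (norm_nonneg v)]

lemma e2norm_mulVec_le {a b : ℕ} (Z : Matrix (Fin a) (Fin b) ℝ) (w : Fin a → ℝ) :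
    e2norm (Zᵀ.mulVec w) ≤ frob Z * e2norm w := by
  have hfr : 0 ≤ frob Z := Real.sqrt_nonneg _
  have key : (e2norm (Zᵀ.mulVec w))^2 ≤ (frob Z)^2 * (e2norm w)^2 := by
    rw [e2norm_sq, e2norm_sq]
    have hfr2 : (frob Z)^2 = ∑ i, ∑ j, (Z i j)^2 :=
      Real.sq_sqrt (Finset.sum_nonneg fun i _ => Finset.sum_nonneg fun j _ => sq_nonneg _)
    rw [hfr2, Finset.sum_comm, Finset.sum_mul]
    apply Finset.sum_le_sum
    intro j _
    have h : Zᵀ.mulVec w j = ∑ i, Z i j * w i := by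
      simp [Matrix.mulVec, dotProduct, Matrix.transpose_apply]
    rw [h]
    exact Finset.sum_mul_sq_le_sq_mul_sq _ _ _
  nlinarith [e2norm_nonneg (Zᵀ.mulVec w), e2norm_nonneg w, mul_nonneg hfr (e2norm_nonneg w)]

lemma e2norm_sub_le' {k : ℕ} (u v : Fin k → ℝ) : e2norm u ≤ e2norm (u - v) + e2norm v := by
  have := e2norm_add_le (u - v) v
  simpa using this

lemma e2norm_sub_comm {k : ℕ} (u v : Fin k → ℝ) : e2norm (u - v) = e2norm (v - u) := by
  unfold e2norm
  congr 1
  refine Finset.sum_congr rfl fun i _ => ?_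
  simp only [Pi.sub_apply]
  ring

lemma mulVec_continuous' {a b : ℕ} (M : Matrix (Fin a) (Fin b) ℝ) :
    Continuous (fun w : Fin b → ℝ => M.mulVec w) := by
  apply continuous_pi; intro j
  simp only [Matrix.mulVec, dotProduct]
  exact continuous_finset_sum _ fun i _ => continuous_const.mul (continuous_apply i)


set_option maxHeartbeats 4000000 in
/-- Lemma 6.1, small-ball anti-concentration.
Let `λ ≤ σL`, `f` `L`-Lipschitz, `‖Z‖_F = 1`, and let `D` be a sub-Gaussian random
vector with tail `P(‖D‖₂ ≥ ε) ≤ 2 exp(−ε²/(2σ²))` such that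
`E[⟨v, f(y+D)⟩²] ≥ λ²‖v‖₂²` for all `v`. Then
`P(‖Zᵀ f(y+D)‖₂ ≥ λ/2) ≥ (1/1058) λ⁴/(σ⁴ L⁴)`. -/
theorem small_ball_lemma
    {Ω : Type*} [MeasurableSpace Ω] (μ : Measure Ω) [IsProbabilityMeasure μ]
    (n m : ℕ) (L σ lam : ℝ)
    (hL : 0 < L) (hσ : 0 < σ) (hlam : 0 < lam) (hlamle : lam ≤ σ * L)
    (f : (Fin n → ℝ) → (Fin m → ℝ))
    (hf : ∀ u v : Fin n → ℝ, e2norm (f u - f v) ≤ L * e2norm (u - v))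
    (y : Fin n → ℝ) (Z : Matrix (Fin m) (Fin n) ℝ) (hZ : frob Z = 1)
    (D : Ω → (Fin n → ℝ)) (hD : Measurable D)
    (htail : ∀ ε : ℝ, 0 ≤ ε →
        μ {ω | ε ≤ e2norm (D ω)} ≤ ENNReal.ofReal (2 * Real.exp (-(ε ^ 2) / (2 * σ ^ 2))))
    (hmin : ∀ v : Fin m → ℝ,
        lam ^ 2 * (e2norm v) ^ 2 ≤ ∫ ω, (∑ i, v i * f (y + D ω) i) ^ 2 ∂μ) :
    ENNReal.ofReal ((1 / 1058) * lam ^ 4 / (σ ^ 4 * L ^ 4)) ≤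
      μ {ω | lam / 2 ≤ e2norm (Zᵀ.mulVec (f (y + D ω)))} := by
  classical
  have hKnn : (0:ℝ) ≤ L * Real.sqrt n := mul_nonneg hL.le (Real.sqrt_nonneg _)
  have hfc : Continuous f := by
    refine (LipschitzWith.of_dist_le_mul (K := Real.toNNReal (L * Real.sqrt n)) ?_).continuous
    intro u v
    rw [Real.coe_toNNReal _ hKnn, dist_eq_norm, dist_eq_norm]
    calc ‖f u - f v‖ ≤ e2norm (f u - f v) := norm_le_e2norm _
      _ ≤ L * e2norm (u - v) := hf u v
      _ ≤ L * (Real.sqrt n * ‖u - v‖) :=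
          mul_le_mul_of_nonneg_left (e2norm_le_sqrt_mul_norm _) hL.le
      _ = L * Real.sqrt n * ‖u - v‖ := by ring
  have hGm : Measurable (fun ω => f (y + D ω)) :=
    hfc.measurable.comp (measurable_const.add hD)
  have hNm : Measurable (fun ω => e2norm (Zᵀ.mulVec (f (y + D ω)))) :=
    ((e2norm_continuous.comp (mulVec_continuous' Zᵀ)).measurable).comp hGm
  have hDn : Measurable (fun ω => e2norm (D ω)) :=
    e2norm_continuous.measurable.comp hD
  set E : Set Ω := {ω | lam / 2 ≤ e2norm (Zᵀ.mulVec (f (y + D ω)))} with hEdef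
  have hEmeas : MeasurableSet E := measurableSet_le measurable_const hNm
  set A := e2norm (Zᵀ.mulVec (f y)) with hAdef
  have hAnn : 0 ≤ A := e2norm_nonneg _
  have hdev : ∀ ω, e2norm (Zᵀ.mulVec (f (y + D ω)) - Zᵀ.mulVec (f y)) ≤ L * e2norm (D ω) := by
    intro ω
    rw [← Matrix.mulVec_sub]
    have hyd : y + D ω - y = D ω := by abel
    calc e2norm (Zᵀ.mulVec (f (y + D ω) - f y)) ≤ frob Z * e2norm (f (y + D ω) - f y) :=
        e2norm_mulVec_le Z _
      _ = e2norm (f (y + D ω) - f y) := by rw [hZ, one_mul]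
      _ ≤ L * e2norm (y + D ω - y) := hf _ _
      _ = L * e2norm (D ω) := by rw [hyd]
  have hupper : ∀ ω, e2norm (Zᵀ.mulVec (f (y + D ω))) ≤ A + L * e2norm (D ω) := by
    intro ω
    have h1 := e2norm_sub_le' (Zᵀ.mulVec (f (y + D ω))) (Zᵀ.mulVec (f y))
    have h2 := hdev ω
    rw [hAdef]; linarith
  have hlower : ∀ ω, A ≤ e2norm (Zᵀ.mulVec (f (y + D ω))) + L * e2norm (D ω) := by
    intro ω
    have h1 := e2norm_sub_le' (Zᵀ.mulVec (f y)) (Zᵀ.mulVec (f (y + D ω)))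
    rw [e2norm_sub_comm] at h1
    have h2 := hdev ω
    rw [hAdef]; linarith
  by_cases hAbig : lam / 2 + 2 * σ * L < A
  · -- Case A: the mean is large
    have hsub : Eᶜ ⊆ {ω | 2 * σ ≤ e2norm (D ω)} := by
      intro ω hω
      simp only [hEdef, Set.mem_compl_iff, Set.mem_setOf_eq, not_le] at hω
      have h1 := hlower ω
      have h2 := e2norm_nonneg (D ω)
      show 2 * σ ≤ e2norm (D ω)
      nlinarith only [h1, h2, hω, hAbig, hL, hσ]
    have hEc : μ Eᶜ ≤ ENNReal.ofReal (2 * Real.exp (-2)) := by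
      have h1 := htail (2 * σ) (by positivity)
      have harg : -((2 * σ) ^ 2) / (2 * σ ^ 2) = (-2 : ℝ) := by
        field_simp
      rw [harg] at h1
      exact le_trans (measure_mono hsub) h1
    have hmE : μ E = 1 - μ Eᶜ := by
      have h := prob_compl_eq_one_sub (μ := μ) hEmeas.compl
      rwa [compl_compl] at h
    rw [hmE]
    have hexp2 : 2 * Real.exp (-2) ≤ 0.28 := by
      have h1 : (2.7182818283 : ℝ) < Real.exp 1 := Real.exp_one_gt_d9
      have h3 : Real.exp (-2) * (Real.exp 1 * Real.exp 1) = 1 := by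
        rw [← Real.exp_add, ← Real.exp_add]; norm_num
      nlinarith only [h1, h3, Real.exp_pos (-2), Real.exp_pos 1]
    have htgt : (1 / 1058 : ℝ) * lam ^ 4 / (σ ^ 4 * L ^ 4) ≤ 1 - 2 * Real.exp (-2) := by
      have h4 : lam ^ 4 ≤ σ ^ 4 * L ^ 4 := by
        have h6 := pow_le_pow_left₀ hlam.le hlamle 4
        nlinarith only [h6]
      have h5 : (1 / 1058 : ℝ) * lam ^ 4 / (σ ^ 4 * L ^ 4) ≤ 1 / 1058 := by
        rw [div_le_iff₀ (by positivity)]; nlinarith only [h4]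
      linarith
    calc ENNReal.ofReal ((1 / 1058) * lam ^ 4 / (σ ^ 4 * L ^ 4))
        ≤ ENNReal.ofReal (1 - 2 * Real.exp (-2)) := ENNReal.ofReal_le_ofReal htgt
      _ = 1 - ENNReal.ofReal (2 * Real.exp (-2)) := by
          rw [ENNReal.ofReal_sub _ (by positivity), ENNReal.ofReal_one]
      _ ≤ 1 - μ Eᶜ := tsub_le_tsub_left hEc 1
  · -- Case B
    push_neg at hAbig
    have hA25 : A ≤ 5 / 2 * (σ * L) := by nlinarith only [hAbig, hlamle]
    -- parameters
    set u := σ ^ 2 * L ^ 2 / lam ^ 2 with hudef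
    have hu1 : (1:ℝ) ≤ u := by
      rw [hudef, le_div_iff₀ (by positivity)]
      nlinarith only [pow_le_pow_left₀ hlam.le hlamle 2]
    have hu0 : (0:ℝ) < u := lt_of_lt_of_le one_pos hu1
    have hulam : u * lam ^ 2 = σ ^ 2 * L ^ 2 := by
      rw [hudef]; field_simp
    set q := lam ^ 4 / (4096 * (σ ^ 4 * L ^ 4)) with hqdef
    have hq0 : 0 < q := by rw [hqdef]; positivity
    have hqu : q * (4096 * u ^ 2) = 1 := by
      rw [hqdef, hudef]; field_simp
    have hqle : q ≤ 1 / 4096 := by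
      have h1 : q * 4096 ≤ q * (4096 * u ^ 2) := by
        nlinarith only [mul_nonneg hq0.le
          (by nlinarith only [hu1] : (0:ℝ) ≤ u ^ 2 - 1)]
      linarith only [h1, hqu]
    set s := Real.log (1 / q) with hsdef
    have hinvq : 1 / q = 4096 * u ^ 2 := by
      rw [div_eq_iff hq0.ne']; linarith [hqu]
    have hexpq : Real.exp (-s) = q := by
      rw [hsdef, one_div, Real.log_inv, neg_neg, Real.exp_log hq0]
    have hlog : s = Real.log 4096 + 2 * Real.log u := by
      rw [hsdef, hinvq, Real.log_mul (by norm_num) (by positivity), Real.log_pow]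
      push_cast; ring
    have hs84 : s ≤ 8.4 + 2 * (u - 1) := by
      have h2 : Real.log 4096 ≤ 8.4 := by
        rw [show (4096:ℝ) = 2 ^ 12 by norm_num, Real.log_pow]
        have h9 := Real.log_two_lt_d9
        push_cast; nlinarith only [h9]
      have h3 : Real.log u ≤ u - 1 := Real.log_le_sub_one_of_pos hu0
      rw [hlog]; linarith
    have hs0 : 0 < s := by
      have h1 : (0:ℝ) < Real.log 4096 := Real.log_pos (by norm_num)
      have h2 : 0 ≤ Real.log u := Real.log_nonneg hu1
      rw [hlog]; linarith
    set T := σ * Real.sqrt (2 * s) with hTdef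
    have hT0 : 0 < T := mul_pos hσ (Real.sqrt_pos.mpr (by linarith))
    have hT2 : T ^ 2 = 2 * σ ^ 2 * s := by
      rw [hTdef, mul_pow, Real.sq_sqrt (by linarith)]; ring
    clear_value T s q u
    -- tail probabilities
    have htail' : ∀ k : ℕ, (μ {ω | ((k:ℝ) + 1) * T ≤ e2norm (D ω)}).toReal ≤ 2 * q ^ (k + 1) := by
      intro k
      have hk1 : (0:ℝ) ≤ (k:ℝ) := Nat.cast_nonneg k
      have h1 := htail (((k:ℝ) + 1) * T) (mul_nonneg (by linarith) hT0.le)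
      have harg : -((((k:ℝ) + 1) * T) ^ 2) / (2 * σ ^ 2) = -(((k:ℝ) + 1) ^ 2 * s) := by
        rw [mul_pow, hT2]; field_simp
      rw [harg] at h1
      have h2 : Real.exp (-(((k:ℝ) + 1) ^ 2 * s)) ≤ q ^ (k + 1) := by
        have h3 : q ^ (k + 1) = Real.exp (-(((k:ℝ) + 1) * s)) := by
          rw [← hexpq, ← Real.exp_nat_mul]
          congr 1; push_cast; ring
        rw [h3]
        apply Real.exp_le_exp.mpr
        nlinarith only [mul_nonneg (mul_nonneg hk1 hk1) hs0.le, mul_nonneg hk1 hs0.le]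
      have h4 : μ {ω | ((k:ℝ) + 1) * T ≤ e2norm (D ω)} ≤ ENNReal.ofReal (2 * q ^ (k + 1)) :=
        le_trans h1 (ENNReal.ofReal_le_ofReal (by linarith only [h2]))
      calc (μ {ω | ((k:ℝ) + 1) * T ≤ e2norm (D ω)}).toReal
          ≤ (ENNReal.ofReal (2 * q ^ (k + 1))).toReal :=
            ENNReal.toReal_mono ENNReal.ofReal_ne_top h4
        _ = 2 * q ^ (k + 1) := ENNReal.toReal_ofReal (by nlinarith only [pow_pos hq0 (k + 1)])
    -- the annuli
    set As : ℕ → Set Ω := fun k =>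
      {ω | ((k:ℝ) + 1) * T ≤ e2norm (D ω)} ∩ {ω | e2norm (D ω) < ((k:ℝ) + 2) * T} with hAsdef
    have hAsm : ∀ k, MeasurableSet (As k) := fun k =>
      (measurableSet_le measurable_const hDn).inter (measurableSet_lt hDn measurable_const)
    have hdisj : Pairwise (Function.onFun Disjoint As) := by
      intro k l hkl
      simp only [Function.onFun, hAsdef]
      rw [Set.disjoint_left]
      rintro ω ⟨hk1, hk2⟩ ⟨hl1, hl2⟩
      simp only [Set.mem_setOf_eq] at hk1 hk2 hl1 hl2
      rcases lt_or_gt_of_ne hkl with h | h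
      · have hc : (k:ℝ) + 1 ≤ (l:ℝ) := by exact_mod_cast h
        nlinarith only [hc, hk1, hk2, hl1, hl2, hT0]
      · have hc : (l:ℝ) + 1 ≤ (k:ℝ) := by exact_mod_cast h
        nlinarith only [hc, hk1, hk2, hl1, hl2, hT0]
    have hcover : ∀ ω, T ≤ e2norm (D ω) → ω ∈ ⋃ k, As k := by
      intro ω hω
      have hd0 : 0 ≤ e2norm (D ω) := e2norm_nonneg _
      have hdT : 1 ≤ e2norm (D ω) / T := (one_le_div hT0).mpr hω
      set j := Nat.floor (e2norm (D ω) / T) with hj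
      have hj1 : 1 ≤ j := Nat.le_floor (by exact_mod_cast hdT)
      have hjle : (j:ℝ) * T ≤ e2norm (D ω) := by
        rw [← le_div_iff₀ hT0]
        exact Nat.floor_le (div_nonneg hd0 hT0.le)
      have hjlt : e2norm (D ω) < ((j:ℝ) + 1) * T := by
        rw [← div_lt_iff₀ hT0]
        exact Nat.lt_floor_add_one _
      have hcast : ((j - 1 : ℕ) : ℝ) = (j:ℝ) - 1 := by
        rw [Nat.cast_sub hj1]; norm_num
      refine Set.mem_iUnion.mpr ⟨j - 1, ⟨?_, ?_⟩⟩
      · show (((j - 1 : ℕ) : ℝ) + 1) * T ≤ e2norm (D ω)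
        rw [hcast]
        have he : ((j:ℝ) - 1 + 1) * T = (j:ℝ) * T := by ring
        linarith only [hjle, he.le, he.ge]
      · show e2norm (D ω) < (((j - 1 : ℕ) : ℝ) + 2) * T
        rw [hcast]
        have he : ((j:ℝ) - 1 + 2) * T = ((j:ℝ) + 1) * T := by ring
        linarith only [hjlt, he.le, he.ge]
    -- integrability of the coordinate squares
    have hint : ∀ j : Fin n, Integrable (fun ω => (∑ i, Z i j * f (y + D ω) i) ^ 2) μ := by
      intro j
      by_contra hI
      have h0 : ∫ ω, (∑ i, Z i j * f (y + D ω) i) ^ 2 ∂μ = 0 := integral_undef hI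
      have hm := hmin (fun i => Z i j)
      rw [h0] at hm
      have hv0 : ∑ i, (Z i j) ^ 2 = 0 := by
        have h1 := e2norm_sq (fun i : Fin m => Z i j)
        have h2 : 0 ≤ ∑ i, (Z i j) ^ 2 := Finset.sum_nonneg fun _ _ => sq_nonneg _
        have h4 : (e2norm (fun i : Fin m => Z i j)) ^ 2 ≤ 0 := by
          by_contra hc
          push_neg at hc
          have h5 : 0 < lam ^ 2 * (e2norm (fun i : Fin m => Z i j)) ^ 2 :=
            mul_pos (pow_pos hlam 2) hc
          linarith only [h5, hm]
        rw [h1] at h4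
        linarith only [h2, h4]
      have hz : ∀ i, Z i j = 0 := by
        intro i
        have h3 := (Finset.sum_eq_zero_iff_of_nonneg
          (fun i _ => sq_nonneg (Z i j))).mp hv0 i (Finset.mem_univ i)
        exact pow_eq_zero_iff two_ne_zero |>.mp h3
      apply hI
      have heq : (fun ω => (∑ i, Z i j * f (y + D ω) i) ^ 2) = fun _ => (0:ℝ) := by
        funext ω
        rw [Finset.sum_eq_zero (fun i _ => by rw [hz i, zero_mul])]
        norm_num
      rw [heq]
      exact integrable_zero _ _ _
    -- X and its basic facts
    set X : Ω → ℝ := fun ω => (e2norm (Zᵀ.mulVec (f (y + D ω)))) ^ 2 with hXdef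
    have hXsum : X = fun ω => ∑ j, (∑ i, Z i j * f (y + D ω) i) ^ 2 := by
      funext ω
      show (e2norm (Zᵀ.mulVec (f (y + D ω)))) ^ 2 = _
      rw [e2norm_sq]
      refine Finset.sum_congr rfl fun j _ => ?_
      simp [Matrix.mulVec, dotProduct, Matrix.transpose_apply]
    have hXint : Integrable X μ := by
      rw [hXsum]; exact integrable_finset_sum _ fun j _ => hint j
    have hXnn : ∀ ω, 0 ≤ X ω := fun ω => sq_nonneg _
    have hfrob1 : ∑ j, ∑ i, (Z i j) ^ 2 = (1:ℝ) := by
      have h1 : (frob Z) ^ 2 = ∑ i, ∑ j, (Z i j) ^ 2 :=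
        Real.sq_sqrt (Finset.sum_nonneg fun i _ => Finset.sum_nonneg fun j _ => sq_nonneg _)
      rw [hZ] at h1
      rw [Finset.sum_comm]
      linarith only [h1]
    have hlamX : lam ^ 2 ≤ ∫ ω, X ω ∂μ := by
      rw [hXsum, integral_finset_sum _ fun j _ => hint j]
      have h1 : ∀ j : Fin n, lam ^ 2 * ∑ i, (Z i j) ^ 2
          ≤ ∫ ω, (∑ i, Z i j * f (y + D ω) i) ^ 2 ∂μ := by
        intro j
        have h2 := hmin (fun i => Z i j)
        have h3 := e2norm_sq (fun i : Fin m => Z i j)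
        rw [h3] at h2
        exact h2
      calc lam ^ 2 = ∑ j, lam ^ 2 * ∑ i, (Z i j) ^ 2 := by
            rw [← Finset.mul_sum, hfrob1, mul_one]
        _ ≤ _ := Finset.sum_le_sum fun j _ => h1 j
    -- splitting the integral
    have hsplit : ∫ ω in E, X ω ∂μ + ∫ ω in Eᶜ, X ω ∂μ = ∫ ω, X ω ∂μ :=
      integral_add_compl hEmeas hXint
    have hmuEc1 : (μ Eᶜ).toReal ≤ 1 := by
      have h1 : μ Eᶜ ≤ 1 := prob_le_one
      calc (μ Eᶜ).toReal ≤ (1 : ENNReal).toReal := ENNReal.toReal_mono ENNReal.one_ne_top h1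
        _ = 1 := by simp
    have hEcInt : ∫ ω in Eᶜ, X ω ∂μ ≤ lam ^ 2 / 4 := by
      have hb : ∀ ω ∈ Eᶜ, X ω ≤ (lam / 2) ^ 2 := by
        intro ω hω
        simp only [hEdef, Set.mem_compl_iff, Set.mem_setOf_eq, not_le] at hω
        have h2 := e2norm_nonneg (Zᵀ.mulVec (f (y + D ω)))
        show (e2norm (Zᵀ.mulVec (f (y + D ω)))) ^ 2 ≤ (lam / 2) ^ 2
        nlinarith only [hω, h2, hlam]
      calc ∫ ω in Eᶜ, X ω ∂μ ≤ ∫ _ω in Eᶜ, (lam / 2) ^ 2 ∂μ :=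
          setIntegral_mono_on hXint.integrableOn
            (integrableOn_const (measure_ne_top μ _)) hEmeas.compl hb
        _ = (μ Eᶜ).toReal * (lam / 2) ^ 2 := by rw [setIntegral_const, smul_eq_mul, measureReal_def]
        _ ≤ 1 * (lam / 2) ^ 2 := by
            nlinarith only [hmuEc1, sq_nonneg (lam / 2), ENNReal.toReal_nonneg (a := μ Eᶜ)]
        _ = lam ^ 2 / 4 := by ring
    set U : Set Ω := ⋃ k, As k with hUdef
    have hUm : MeasurableSet U := MeasurableSet.iUnion hAsm
    have hEsplit2 : ∫ ω in E, X ω ∂μ = ∫ ω in E ∩ U, X ω ∂μ + ∫ ω in E \ U, X ω ∂μ :=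
      (integral_inter_add_diff hUm hXint.integrableOn).symm
    have h_inter : ∫ ω in E ∩ U, X ω ∂μ ≤ ∫ ω in U, X ω ∂μ :=
      setIntegral_mono_set hXint.integrableOn (ae_of_all _ hXnn)
        (HasSubset.Subset.eventuallyLE Set.inter_subset_right)
    have h_diff : ∫ ω in E \ U, X ω ∂μ ≤ (A + L * T) ^ 2 * (μ E).toReal := by
      have hb : ∀ ω ∈ E \ U, X ω ≤ (A + L * T) ^ 2 := by
        intro ω hω
        have hdT : e2norm (D ω) < T := by
          by_contra hcon
          push_neg at hcon
          exact hω.2 (hcover ω hcon)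
        have h1 := hupper ω
        have h2 := e2norm_nonneg (Zᵀ.mulVec (f (y + D ω)))
        have h3 := e2norm_nonneg (D ω)
        have h4 : e2norm (Zᵀ.mulVec (f (y + D ω))) ≤ A + L * T := by
          nlinarith only [h1, hdT, hL]
        show (e2norm (Zᵀ.mulVec (f (y + D ω)))) ^ 2 ≤ (A + L * T) ^ 2
        exact pow_le_pow_left₀ h2 h4 2
      calc ∫ ω in E \ U, X ω ∂μ ≤ ∫ _ω in E \ U, (A + L * T) ^ 2 ∂μ :=
          setIntegral_mono_on hXint.integrableOn
            (integrableOn_const (measure_ne_top μ _)) (hEmeas.diff hUm) hb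
        _ = (μ (E \ U)).toReal * (A + L * T) ^ 2 := by rw [setIntegral_const, smul_eq_mul, measureReal_def]
        _ ≤ (μ E).toReal * (A + L * T) ^ 2 := by
            have h4 := ENNReal.toReal_mono (measure_ne_top μ E)
              (measure_mono (Set.diff_subset : E \ U ⊆ E))
            nlinarith only [h4, sq_nonneg (A + L * T),
              ENNReal.toReal_nonneg (a := μ (E \ U))]
        _ = (A + L * T) ^ 2 * (μ E).toReal := by ring
    -- the tail sum
    have hterm : ∀ k : ℕ, ∫ ω in As k, X ω ∂μ
        ≤ (4 * A ^ 2 * q) * q ^ k + (4 * L ^ 2 * T ^ 2 * (4 * q)) * (4 * q) ^ k := by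
      intro k
      have hk0 : (0:ℝ) ≤ (k:ℝ) := Nat.cast_nonneg k
      have hbd : ∀ ω ∈ As k, X ω ≤ (A + ((k:ℝ) + 2) * (L * T)) ^ 2 := by
        rintro ω ⟨h1, h2⟩
        simp only [Set.mem_setOf_eq] at h1 h2
        have hu := hupper ω
        have h3 := e2norm_nonneg (Zᵀ.mulVec (f (y + D ω)))
        have h4 := e2norm_nonneg (D ω)
        have h5 : e2norm (Zᵀ.mulVec (f (y + D ω))) ≤ A + ((k:ℝ) + 2) * (L * T) := by
          nlinarith only [hu, h2, hL]
        show (e2norm (Zᵀ.mulVec (f (y + D ω)))) ^ 2 ≤ (A + ((k:ℝ) + 2) * (L * T)) ^ 2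
        exact pow_le_pow_left₀ h3 h5 2
      have hq_pow : (0:ℝ) < q ^ (k + 1) := pow_pos hq0 _
      have hstep : ∫ ω in As k, X ω ∂μ ≤ (A + ((k:ℝ) + 2) * (L * T)) ^ 2 * (2 * q ^ (k + 1)) := by
        calc ∫ ω in As k, X ω ∂μ ≤ ∫ _ω in As k, (A + ((k:ℝ) + 2) * (L * T)) ^ 2 ∂μ :=
            setIntegral_mono_on hXint.integrableOn
              (integrableOn_const (measure_ne_top μ _)) (hAsm k) hbd
          _ = (μ (As k)).toReal * (A + ((k:ℝ) + 2) * (L * T)) ^ 2 := by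
              rw [setIntegral_const, smul_eq_mul, measureReal_def]
          _ ≤ (2 * q ^ (k + 1)) * (A + ((k:ℝ) + 2) * (L * T)) ^ 2 := by
              have hmono : μ (As k) ≤ μ {ω | ((k:ℝ) + 1) * T ≤ e2norm (D ω)} :=
                measure_mono Set.inter_subset_left
              have h5 := le_trans (ENNReal.toReal_mono
                (measure_ne_top μ _) hmono) (htail' k)
              nlinarith only [h5, sq_nonneg (A + ((k:ℝ) + 2) * (L * T)),
                ENNReal.toReal_nonneg (a := μ (As k))]
          _ = (A + ((k:ℝ) + 2) * (L * T)) ^ 2 * (2 * q ^ (k + 1)) := by ring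
      refine le_trans hstep ?_
      have hb2 : ((k:ℝ) + 2) ^ 2 ≤ 4 ^ (k + 1) := by
        have h1 : (k + 2 : ℕ) ≤ 2 ^ (k + 1) := by
          have h2 := Nat.lt_two_pow_self (n := k + 1)
          omega
        have h2 : ((k:ℝ) + 2) ≤ 2 ^ (k + 1) := by exact_mod_cast h1
        have h3 : ((2:ℝ) ^ (k + 1)) * (2 ^ (k + 1)) = 4 ^ (k + 1) := by
          rw [← mul_pow]; norm_num
        nlinarith only [h2, h3, hk0, pow_pos (show (0:ℝ) < 2 by norm_num) (k + 1)]
      have hsq : (A + ((k:ℝ) + 2) * (L * T)) ^ 2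
          ≤ 2 * A ^ 2 + 2 * ((k:ℝ) + 2) ^ 2 * (L * T) ^ 2 := by
        nlinarith only [sq_nonneg (A - ((k:ℝ) + 2) * (L * T))]
      have hLT2 : (0:ℝ) ≤ (L * T) ^ 2 := sq_nonneg _
      calc (A + ((k:ℝ) + 2) * (L * T)) ^ 2 * (2 * q ^ (k + 1))
          ≤ (2 * A ^ 2 + 2 * ((k:ℝ) + 2) ^ 2 * (L * T) ^ 2) * (2 * q ^ (k + 1)) := by
            nlinarith only [hsq, hq_pow]
        _ = 4 * A ^ 2 * q ^ (k + 1) + 4 * (((k:ℝ) + 2) ^ 2 * q ^ (k + 1)) * (L * T) ^ 2 := by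
            ring
        _ ≤ 4 * A ^ 2 * q ^ (k + 1) + 4 * (4 ^ (k + 1) * q ^ (k + 1)) * (L * T) ^ 2 := by
            have h6 : ((k:ℝ) + 2) ^ 2 * q ^ (k + 1) ≤ 4 ^ (k + 1) * q ^ (k + 1) := by
              nlinarith only [hb2, hq_pow]
            nlinarith only [h6, hLT2]
        _ = (4 * A ^ 2 * q) * q ^ k + (4 * L ^ 2 * T ^ 2 * (4 * q)) * (4 * q) ^ k := by
            rw [mul_pow]
            ring
    have hq1 : q < 1 := lt_of_le_of_lt hqle (by norm_num)
    have h4q1 : 4 * q < 1 := by linarith only [hqle]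
    have h4q0 : (0:ℝ) ≤ 4 * q := by linarith only [hq0]
    have hsum1 : Summable (fun k : ℕ => (4 * A ^ 2 * q) * q ^ k) :=
      (summable_geometric_of_lt_one hq0.le hq1).mul_left _
    have hsum2 : Summable (fun k : ℕ => (4 * L ^ 2 * T ^ 2 * (4 * q)) * (4 * q) ^ k) :=
      (summable_geometric_of_lt_one h4q0 h4q1).mul_left _
    have hsumc : Summable (fun k : ℕ =>
        (4 * A ^ 2 * q) * q ^ k + (4 * L ^ 2 * T ^ 2 * (4 * q)) * (4 * q) ^ k) :=
      hsum1.add hsum2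
    have hsumInt : Summable (fun k : ℕ => ∫ ω in As k, X ω ∂μ) :=
      Summable.of_nonneg_of_le
        (fun k => setIntegral_nonneg (hAsm k) (fun ω _ => hXnn ω)) hterm hsumc
    have hUint : ∫ ω in U, X ω ∂μ = ∑' k, ∫ ω in As k, X ω ∂μ := by
      rw [hUdef]
      exact integral_iUnion hAsm hdisj hXint.integrableOn
    have hUle : ∫ ω in U, X ω ∂μ ≤ 8 * A ^ 2 * q + 32 * L ^ 2 * T ^ 2 * q := by
      rw [hUint]
      have htsum : ∑' k, ∫ ω in As k, X ω ∂μ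
          ≤ (4 * A ^ 2 * q) * (1 - q)⁻¹ + (4 * L ^ 2 * T ^ 2 * (4 * q)) * (1 - 4 * q)⁻¹ := by
        calc ∑' k, ∫ ω in As k, X ω ∂μ
            ≤ ∑' k, ((4 * A ^ 2 * q) * q ^ k + (4 * L ^ 2 * T ^ 2 * (4 * q)) * (4 * q) ^ k) :=
            Summable.tsum_le_tsum hterm hsumInt hsumc
          _ = (4 * A ^ 2 * q) * (∑' k : ℕ, q ^ k)
              + (4 * L ^ 2 * T ^ 2 * (4 * q)) * (∑' k : ℕ, (4 * q) ^ k) := by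
              rw [Summable.tsum_add hsum1 hsum2, tsum_mul_left, tsum_mul_left]
          _ = _ := by
              rw [tsum_geometric_of_lt_one hq0.le hq1, tsum_geometric_of_lt_one h4q0 h4q1]
      have hinv1 : (1 - q)⁻¹ ≤ 2 := by
        rw [inv_le_comm₀ (by linarith only [hq1]) (by norm_num)]
        linarith only [hqle]
      have hinv2 : (1 - 4 * q)⁻¹ ≤ 2 := by
        rw [inv_le_comm₀ (by linarith only [h4q1]) (by norm_num)]
        linarith only [hqle]
      have t1 := mul_le_mul_of_nonneg_left hinv1
        (show (0:ℝ) ≤ 4 * A ^ 2 * q by positivity)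
      have t2 := mul_le_mul_of_nonneg_left hinv2
        (show (0:ℝ) ≤ 4 * L ^ 2 * T ^ 2 * (4 * q) by positivity)
      nlinarith only [htsum, t1, t2]
    -- numeric bound on the tail
    have hA2 : A ^ 2 ≤ 25 / 4 * (σ ^ 2 * L ^ 2) := by
      nlinarith only [hA25, hAnn, mul_pos hσ hL]
    have hLT : L ^ 2 * T ^ 2 = 2 * (σ ^ 2 * L ^ 2) * s := by rw [hT2]; ring
    have hP : (0:ℝ) < σ ^ 2 * L ^ 2 := by positivity
    have htail_le : 8 * A ^ 2 * q + 32 * L ^ 2 * T ^ 2 * q ≤ lam ^ 2 / 4 := by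
      have h1 : 50 + 64 * s ≤ 1024 * u := by linarith only [hs84, hu1]
      have h2 : q * (50 + 64 * s) ≤ q * (1024 * u) :=
        mul_le_mul_of_nonneg_left h1 hq0.le
      have h4 : q * (1024 * u) = 1 / (4 * u) := by
        rw [eq_div_iff (by positivity)]
        linear_combination hqu
      have e1 : 8 * A ^ 2 * q ≤ 50 * (σ ^ 2 * L ^ 2) * q := by
        nlinarith only [mul_le_mul_of_nonneg_right
          (show 8 * A ^ 2 ≤ 50 * (σ ^ 2 * L ^ 2) by
            nlinarith only [hA2]) hq0.le]
      have e2 : 32 * L ^ 2 * T ^ 2 * q = 64 * (σ ^ 2 * L ^ 2) * s * q := by rw [hT2]; ring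
      have e3 : (σ ^ 2 * L ^ 2) * (q * (50 + 64 * s)) ≤ (σ ^ 2 * L ^ 2) * (1 / (4 * u)) :=
        mul_le_mul_of_nonneg_left (le_trans h2 h4.le) hP.le
      have e4 : (σ ^ 2 * L ^ 2) * (1 / (4 * u)) = lam ^ 2 / 4 := by
        rw [← hulam]
        field_simp
      nlinarith only [e1, e2.le, e2.ge, e3, e4.le, e4.ge]
    -- final assembly
    have hhalf : lam ^ 2 / 2 ≤ (A + L * T) ^ 2 * (μ E).toReal := by
      have c1 : ∫ ω in E, X ω ∂μ ≤ lam ^ 2 / 4 + (A + L * T) ^ 2 * (μ E).toReal := by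
        rw [hEsplit2]
        have c2 := le_trans h_inter (le_trans hUle htail_le)
        linarith only [h_diff, h_inter, c2]
      linarith only [hlamX, hsplit, hEcInt, c1]
    have hM2 : (A + L * T) ^ 2 ≤ 529 * (σ ^ 2 * L ^ 2) * u := by
      have c3 : (A + L * T) ^ 2 ≤ 2 * A ^ 2 + 2 * (L ^ 2 * T ^ 2) := by
        nlinarith only [sq_nonneg (A - L * T)]
      have c4 : (σ ^ 2 * L ^ 2) * s ≤ (σ ^ 2 * L ^ 2) * (6.4 + 2 * u) :=
        mul_le_mul_of_nonneg_left (by linarith only [hs84]) hP.le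
      nlinarith only [hA2, hu1, hP, c3, c4, hLT.le, hLT.ge]
    have hp : (1 / 1058 : ℝ) * lam ^ 4 / (σ ^ 4 * L ^ 4) ≤ (μ E).toReal := by
      have hpnn : (0:ℝ) ≤ (μ E).toReal := ENNReal.toReal_nonneg
      have hPu : (σ ^ 2 * L ^ 2) * u = σ ^ 4 * L ^ 4 / lam ^ 2 := by
        rw [hudef]
        field_simp
      have h5 : lam ^ 2 / 2 ≤ 529 * (σ ^ 4 * L ^ 4 / lam ^ 2) * (μ E).toReal := by
        have c5 := mul_le_mul_of_nonneg_right hM2 hpnn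
        calc lam ^ 2 / 2 ≤ (A + L * T) ^ 2 * (μ E).toReal := hhalf
          _ ≤ 529 * (σ ^ 2 * L ^ 2) * u * (μ E).toReal := c5
          _ = 529 * (σ ^ 4 * L ^ 4 / lam ^ 2) * (μ E).toReal := by
              rw [show 529 * (σ ^ 2 * L ^ 2) * u = 529 * ((σ ^ 2 * L ^ 2) * u) from by ring,
                hPu]
      rw [div_le_iff₀ (by positivity)]
      have h6 := mul_le_mul_of_nonneg_right h5
        (le_of_lt (mul_pos hlam hlam) : (0:ℝ) ≤ lam * lam)
      have hll : (lam * lam) / lam ^ 2 = 1 := by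
        rw [← sq]; exact div_self (pow_ne_zero 2 hlam.ne')
      have h7 : 529 * (σ ^ 4 * L ^ 4 / lam ^ 2) * (μ E).toReal * (lam * lam)
          = 529 * (σ ^ 4 * L ^ 4) * (μ E).toReal := by
        calc 529 * (σ ^ 4 * L ^ 4 / lam ^ 2) * (μ E).toReal * (lam * lam)
            = 529 * (σ ^ 4 * L ^ 4) * (μ E).toReal * ((lam * lam) / lam ^ 2) := by ring
          _ = 529 * (σ ^ 4 * L ^ 4) * (μ E).toReal := by rw [hll, mul_one]
      rw [h7] at h6
      nlinarith only [h6]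
    calc ENNReal.ofReal ((1 / 1058) * lam ^ 4 / (σ ^ 4 * L ^ 4))
        ≤ ENNReal.ofReal ((μ E).toReal) := ENNReal.ofReal_le_ofReal hp
      _ = μ E := ENNReal.ofReal_toReal (measure_ne_top μ E)
end
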